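/- Under the hypotheses of the Strong LAP Argument, the joint distribution p(x_V | θ) and the conditional distribution p(x_j | x_{A_q \ {x_j}}, θ), for any x_j ∈ q, share the same zero-normalized potential for q: the q-potential of the conditional's unique zero-normalized Gibbs representation equals E_q(· | θ_q). -/

import Mathlib

/-- Path connectivity with respect to `V \ A`. -/
def RelPathConn {V : Type*} (G : SimpleGraph V) (A : Set V) (i j : V) : Prop :=
  ∃ w : G.Walk i j, w.IsPath ∧ w.support.tail.dropLast ≠ [] ∧
    ∀ v ∈ w.support.tail.dropLast, v ∉ A

/-- The Strong LAP condition for a clique `q` and a set `A` with `q ⊆ A`. -/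
def StrongLAP {V : Type*} (G : SimpleGraph V) (A q : Set V) : Prop :=
  q ⊆ A ∧ ∃ i ∈ q, ∃ j ∈ q, i ≠ j ∧ ¬ RelPathConn G A i j

/-- The marginal of `p` over the coordinates in `A`. -/
noncomputable def marginal {V : Type*} [Fintype V] [DecidableEq V]
    {X : V → Type*} [∀ v, Fintype (X v)] [∀ v, DecidableEq (X v)]
    (p : (∀ v, X v) → ℝ) (A : Finset V) (x : ∀ v, X v) : ℝ :=
  ∑ y : ∀ v, X v, if ∀ v ∈ A, y v = x v then p y else 0

section AuxLap

set_option linter.unusedSectionVars false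

variable {V : Type*} [Fintype V] [DecidableEq V]
  {X : V → Type*} [∀ v, Fintype (X v)] [∀ v, DecidableEq (X v)]

/-- Patch: use `x` on `s`, `z` elsewhere. -/
def lapPatch (z x : ∀ v, X v) (s : Finset V) : ∀ v, X v :=
  fun v => if v ∈ s then x v else z v

lemma lap_altsum_indep (z x : ∀ v, X v) (q : Finset V) {t : V} (ht : t ∈ q)
    (f : (∀ v, X v) → ℝ)
    (hf : ∀ y y' : ∀ v, X v, (∀ v, v ≠ t → y v = y' v) → f y = f y') :
    ∑ s ∈ q.powerset, (-1 : ℝ) ^ ((q \ s).card) * f (lapPatch z x s) = 0 := by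
  have hqe : q = insert t (q.erase t) := (Finset.insert_erase ht).symm
  rw [hqe, Finset.sum_powerset_insert (Finset.notMem_erase t q)]
  rw [← Finset.sum_add_distrib]
  refine Finset.sum_eq_zero fun s hs => ?_
  rw [Finset.mem_powerset] at hs
  have hts : t ∉ s := fun h => (Finset.notMem_erase t q) (hs h)
  have h1 : (insert t (q.erase t) \ insert t s) = (q.erase t) \ s := by
    ext v
    simp only [Finset.mem_sdiff, Finset.mem_insert, Finset.mem_erase]
    constructor
    · rintro ⟨hv1, hv2⟩
      push_neg at hv2
      rcases hv1 with rfl | hv1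
      · exact absurd rfl hv2.1
      · exact ⟨hv1, fun h => hv2.2 h⟩
    · rintro ⟨⟨hv1, hv2⟩, hv3⟩
      exact ⟨Or.inr ⟨hv1, hv2⟩, by push_neg; exact ⟨hv1, hv3⟩⟩
  have h2 : (insert t (q.erase t) \ s) = insert t ((q.erase t) \ s) := by
    rw [Finset.insert_sdiff_of_notMem _ hts]
  have h3 : t ∉ (q.erase t) \ s := fun h => (Finset.notMem_erase t q) (Finset.mem_sdiff.1 h).1
  have h4 : f (lapPatch z x s) = f (lapPatch z x (insert t s)) := by
    refine hf _ _ fun v hv => ?_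
    simp [lapPatch, Finset.mem_insert, hv]
  rw [h1, h2, Finset.card_insert_of_notMem h3, ← h4, pow_succ]
  ring

lemma lap_altsum_moebius (z x : ∀ v, X v) (q : Finset V)
    (E : Finset V → (∀ v, X v) → ℝ)
    (hEloc : ∀ c y y', (∀ v ∈ c, y v = y' v) → E c y = E c y')
    (hEnorm : ∀ (c : Finset V) y, (∃ t ∈ c, y t = z t) → E c y = 0) :
    ∑ s ∈ q.powerset, (-1 : ℝ) ^ ((q \ s).card) * (∑ c : Finset V, E c (lapPatch z x s))
      = E q x := by
  have swap : ∑ s ∈ q.powerset, (-1 : ℝ) ^ ((q \ s).card) *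
        (∑ c : Finset V, E c (lapPatch z x s))
      = ∑ c : Finset V, ∑ s ∈ q.powerset, (-1 : ℝ) ^ ((q \ s).card) * E c (lapPatch z x s) := by
    rw [Finset.sum_comm]
    exact Finset.sum_congr rfl fun s _ => Finset.mul_sum _ _ _
  rw [swap]
  have key : ∀ c : Finset V,
      (∑ s ∈ q.powerset, (-1 : ℝ) ^ ((q \ s).card) * E c (lapPatch z x s))
        = if c = q then E q x else 0 := by
    intro c
    by_cases hcq : c = q
    · subst hcq
      rw [if_pos rfl]
      rw [Finset.sum_eq_single c]
      · have : (c \ c) = ∅ := Finset.sdiff_self c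
        rw [this, Finset.card_empty, pow_zero, one_mul]
        exact hEloc _ _ _ fun v hv => by simp [lapPatch, hv]
      · intro s hs hsne
        rw [Finset.mem_powerset] at hs
        obtain ⟨t, htc, hts⟩ := Finset.exists_of_ssubset (Finset.ssubset_iff_subset_ne.2 ⟨hs, hsne⟩)
        have : E c (lapPatch z x s) = 0 := hEnorm _ _ ⟨t, htc, by simp [lapPatch, hts]⟩
        rw [this, mul_zero]
      · intro h; exact absurd (Finset.mem_powerset.2 le_rfl) h
    · rw [if_neg hcq]
      by_cases hqc : q ⊆ c
      · obtain ⟨t, htc, htq⟩ := Finset.exists_of_ssubset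
          (Finset.ssubset_iff_subset_ne.2 ⟨hqc, Ne.symm hcq⟩)
        refine Finset.sum_eq_zero fun s hs => ?_
        rw [Finset.mem_powerset] at hs
        have : E c (lapPatch z x s) = 0 :=
          hEnorm _ _ ⟨t, htc, by simp only [lapPatch, if_neg (fun h : t ∈ s => htq (hs h))]⟩
        rw [this, mul_zero]
      · obtain ⟨t, htq, htc⟩ := Finset.not_subset.1 hqc
        exact lap_altsum_indep z x q htq (E c)
          (fun y y' h => hEloc c y y' fun v hv => h v (fun he => htc (he ▸ hv)))
  rw [Finset.sum_congr rfl fun c _ => key c]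
  simp

/-- Positivity of a pinned sum of positive terms. -/
lemma lap_sum_ite_pos (P : (∀ v, X v) → Prop) [DecidablePred P]
    (a : (∀ v, X v) → ℝ) (hpos : ∀ w, 0 < a w) (y : ∀ v, X v) (hy : P y) :
    0 < ∑ w : ∀ v, X v, if P w then a w else 0 := by
  refine Finset.sum_pos' (fun w _ => ?_) ⟨y, Finset.mem_univ y, by rw [if_pos hy]; exact hpos y⟩
  by_cases h : P w
  · rw [if_pos h]; exact (hpos w).le
  · rw [if_neg h]

/-- A pinned sum whose summand does not depend on coordinate `t` is unchanged when
the pinning configuration changes only at `t`. -/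
lemma lap_sum_ite_indep (t : V) (P : V → Prop) [DecidablePred P]
    (a : (∀ v, X v) → ℝ) (ha : ∀ w w', (∀ v, v ≠ t → w v = w' v) → a w = a w')
    (y y' : ∀ v, X v) (hyy : ∀ v, v ≠ t → y v = y' v) :
    (∑ w : ∀ v, X v, if ∀ v, P v → w v = y v then a w else 0)
      = ∑ w : ∀ v, X v, if ∀ v, P v → w v = y' v then a w else 0 := by
  by_cases hPt : P t
  · rw [← Finset.sum_filter, ← Finset.sum_filter]
    refine Finset.sum_nbij' (fun w => Function.update w t (y' t))
      (fun w => Function.update w t (y t)) ?_ ?_ ?_ ?_ ?_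
    · intro w hw
      rw [Finset.mem_filter] at hw ⊢
      refine ⟨Finset.mem_univ _, fun v hv => ?_⟩
      beta_reduce
      rcases eq_or_ne v t with rfl | hvt
      · rw [Function.update_self]
      · rw [Function.update_of_ne hvt]; exact (hw.2 v hv).trans (hyy v hvt)
    · intro w hw
      rw [Finset.mem_filter] at hw ⊢
      refine ⟨Finset.mem_univ _, fun v hv => ?_⟩
      beta_reduce
      rcases eq_or_ne v t with rfl | hvt
      · rw [Function.update_self]
      · rw [Function.update_of_ne hvt]; exact (hw.2 v hv).trans (hyy v hvt).symm
    · intro w hw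
      rw [Finset.mem_filter] at hw
      funext v
      beta_reduce
      rcases eq_or_ne v t with rfl | hvt
      · rw [Function.update_self]; exact (hw.2 v hPt).symm
      · rw [Function.update_of_ne hvt, Function.update_of_ne hvt]
    · intro w hw
      rw [Finset.mem_filter] at hw
      funext v
      beta_reduce
      rcases eq_or_ne v t with rfl | hvt
      · rw [Function.update_self]; exact (hw.2 v hPt).symm
      · rw [Function.update_of_ne hvt, Function.update_of_ne hvt]
    · intro w _
      refine ha _ _ fun v hvt => (Function.update_of_ne hvt _ _).symm
  · refine Finset.sum_congr rfl fun w _ => ?_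
    have : (∀ v, P v → w v = y v) ↔ (∀ v, P v → w v = y' v) := by
      constructor
      · intro h v hv; exact (h v hv).trans (hyy v (fun he => hPt (he ▸ hv)))
      · intro h v hv; exact (h v hv).trans (hyy v (fun he => hPt (he ▸ hv))).symm
    by_cases h : ∀ v, P v → w v = y v
    · rw [if_pos h, if_pos (this.1 h)]
    · rw [if_neg h, if_neg (fun h' => h (this.2 h'))]

/-- Factorization of a pinned sum over the free region `V ∖ A = S ⊔ (V ∖ A ∖ S)`. -/
lemma lap_sum_factor (S : Set V) [DecidablePred (· ∈ S)] (A : Finset V)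
    (hSA : ∀ v, v ∈ S → v ∉ A)
    (a b : (∀ v, X v) → ℝ)
    (ha : ∀ w w', (∀ v, (v ∈ A ∨ v ∈ S) → w v = w' v) → a w = a w')
    (hb : ∀ w w', (∀ v, v ∉ S → w v = w' v) → b w = b w')
    (y : ∀ v, X v) :
    (∑ w : ∀ v, X v, if ∀ v ∈ A, w v = y v then a w * b w else 0)
      = (∑ w : ∀ v, X v, if ∀ v, v ∉ S → w v = y v then a w else 0)
        * (∑ w : ∀ v, X v, if ∀ v, (v ∈ A ∨ v ∈ S) → w v = y v then b w else 0) := by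
  rw [← Finset.sum_filter, ← Finset.sum_filter, ← Finset.sum_filter,
    Finset.sum_mul_sum, ← Finset.sum_product']
  refine (Finset.sum_nbij'
    (fun w => ((fun v => if v ∈ S then w v else y v, fun v => if v ∈ S then y v else w v) :
        (∀ v, X v) × (∀ v, X v)))
    (fun p => fun v => if v ∈ S then p.1 v else p.2 v) ?_ ?_ ?_ ?_ ?_)
  · intro w hw
    rw [Finset.mem_filter] at hw
    rw [Finset.mem_product, Finset.mem_filter, Finset.mem_filter]
    refine ⟨⟨Finset.mem_univ _, fun v hv => ?_⟩, Finset.mem_univ _, fun v hv => ?_⟩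
    · dsimp only
      rw [if_neg hv]
    · dsimp only
      rcases hv with hv | hv
      · rw [if_neg (fun h => hSA v h hv)]; exact hw.2 v hv
      · rw [if_pos hv]
  · intro p hp
    rw [Finset.mem_product, Finset.mem_filter, Finset.mem_filter] at hp
    rw [Finset.mem_filter]
    refine ⟨Finset.mem_univ _, fun v hv => ?_⟩
    have hvS : v ∉ S := fun h => hSA v h hv
    dsimp only
    rw [if_neg hvS]
    exact hp.2.2 v (Or.inl hv)
  · intro w hw
    rw [Finset.mem_filter] at hw
    dsimp only
    funext v
    by_cases hv : v ∈ S
    · simp [hv]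
    · simp [hv]
  · intro p hp
    rw [Finset.mem_product, Finset.mem_filter, Finset.mem_filter] at hp
    dsimp only
    have h1 : (fun v => if v ∈ S then (if v ∈ S then p.1 v else p.2 v) else y v) = p.1 := by
      funext v
      by_cases hv : v ∈ S
      · simp [hv]
      · simp only [if_neg hv]
        exact (hp.1.2 v hv).symm
    have h2 : (fun v => if v ∈ S then y v else (if v ∈ S then p.1 v else p.2 v)) = p.2 := by
      funext v
      by_cases hv : v ∈ S
      · simp only [if_pos hv]
        exact (hp.2.2 v (Or.inr hv)).symm
      · simp [hv]
    rw [h1, h2]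
  · intro w hw
    rw [Finset.mem_filter] at hw
    have h1 : a w = a (fun v => if v ∈ S then w v else y v) := by
      refine ha _ _ fun v hv => ?_
      rcases hv with hv | hv
      · rw [if_neg (fun h => hSA v h hv)]; exact hw.2 v hv
      · rw [if_pos hv]
    have h2 : b w = b (fun v => if v ∈ S then y v else w v) := by
      refine hb _ _ fun v hv => (if_neg hv).symm
    rw [h1, h2]

end AuxLap

/-- Vertices outside `A` reachable from `i` by a path whose vertices after `i` avoid `A`. -/
def reachSet {V : Type*} (G : SimpleGraph V) (A : Set V) (i : V) : Set V :=
  {u | u ∉ A ∧ ∃ p : G.Walk i u, p.IsPath ∧ ∀ v ∈ p.support.tail, v ∉ A}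

section Reach

set_option linter.unusedSectionVars false

variable {V : Type*} [DecidableEq V] {G : SimpleGraph V} {A : Set V} {i : V}

lemma lap_isPath_concat {u v w : V} {p : G.Walk u v} (hp : p.IsPath) (h : G.Adj v w)
    (hw : w ∉ p.support) : (p.concat h).IsPath := by
  have he : p.concat h = (SimpleGraph.Walk.cons h.symm p.reverse).reverse := by
    simp [SimpleGraph.Walk.reverse_cons, SimpleGraph.Walk.concat_eq_append]
  rw [he, SimpleGraph.Walk.isPath_reverse_iff]
  rw [SimpleGraph.Walk.cons_isPath_iff]
  exact ⟨hp.reverse, by simpa using hw⟩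

lemma reachSet_base {u : V} (hu : u ∉ A) (hadj : G.Adj i u) :
    u ∈ reachSet G A i := by
  refine ⟨hu, SimpleGraph.Walk.cons hadj SimpleGraph.Walk.nil, ?_, ?_⟩
  · simp [SimpleGraph.Walk.cons_isPath_iff, hadj.ne]
  · intro v hv
    simp only [SimpleGraph.Walk.support_cons, SimpleGraph.Walk.support_nil,
      List.tail_cons, List.mem_singleton] at hv
    subst hv; exact hu

lemma reachSet_closed {u u' : V} (hu : u ∈ reachSet G A i) (hu' : u' ∉ A)
    (hadj : G.Adj u u') : u' ∈ reachSet G A i := by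
  obtain ⟨huA, p, hp, htail⟩ := hu
  by_cases hmem : u' ∈ p.support
  · refine ⟨hu', p.takeUntil u' hmem, hp.takeUntil hmem, ?_⟩
    intro v hv
    have hv' : v ∈ (p.takeUntil u' hmem).support := by
      rw [SimpleGraph.Walk.support_eq_cons]; exact List.mem_cons_of_mem _ hv
    have hvp : v ∈ p.support := SimpleGraph.Walk.support_takeUntil_subset _ hmem hv'
    have hvi : v ≠ i := by
      intro h; subst h
      have := (hp.takeUntil hmem).support_nodup
      rw [SimpleGraph.Walk.support_eq_cons] at this
      exact (List.nodup_cons.1 this).1 hv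
    rw [SimpleGraph.Walk.support_eq_cons] at hvp
    rcases List.mem_cons.1 hvp with h | h
    · exact absurd h hvi
    · exact htail v h
  · refine ⟨hu', p.concat hadj, lap_isPath_concat hp hadj hmem, ?_⟩
    intro v hv
    rw [SimpleGraph.Walk.support_concat,
      SimpleGraph.Walk.support_eq_cons] at hv
    simp only [List.cons_append, List.tail_cons, List.mem_append, List.mem_singleton] at hv
    rcases hv with h | h
    · exact htail v h
    · subst h; exact hu'

lemma reachSet_relPathConn {u j : V} (hu : u ∈ reachSet G A i) (hjA : j ∈ A)
    (hiA : i ∈ A) (hij : i ≠ j) (hadj : G.Adj u j) : RelPathConn G A i j := by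
  obtain ⟨huA, p, hp, htail⟩ := hu
  have hui : u ≠ i := fun h => huA (h ▸ hiA)
  have hjmem : j ∉ p.support := by
    rw [SimpleGraph.Walk.support_eq_cons]
    intro h
    rcases List.mem_cons.1 h with h | h
    · exact hij h.symm
    · exact htail j h hjA
  have hsup : (p.concat hadj).support.tail = p.support.tail ++ [j] := by
    rw [SimpleGraph.Walk.support_concat,
      SimpleGraph.Walk.support_eq_cons, List.cons_append, List.tail_cons]
    rfl
  have hdl : (p.concat hadj).support.tail.dropLast = p.support.tail := by
    rw [hsup]
    simp
  have hne : p.support.tail ≠ [] := by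
    have : u ∈ p.support.tail := by
      have := p.end_mem_support
      rw [SimpleGraph.Walk.support_eq_cons] at this
      rcases List.mem_cons.1 this with h | h
      · exact absurd h hui
      · exact h
    intro h; rw [h] at this; exact List.not_mem_nil this
  exact ⟨p.concat hadj, lap_isPath_concat hp hadj hjmem, hdl ▸ hne, hdl ▸ htail⟩

end Reach

/-- Under the hypotheses of the Strong LAP Argument, the joint distribution and the
conditional `p(x_j | x_{A_q ∖ {x_j}})` for any `x_j ∈ q` share the same
zero-normalized potential for `q`: any zero-normalized Gibbs representation `F` of
the conditional has `F q = E q`. -/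
theorem strongLAP_conditional_potential
    {V : Type*} [Fintype V] [DecidableEq V] (X : V → Type*) [∀ v, Fintype (X v)]
    [∀ v, DecidableEq (X v)] (z : ∀ v, X v) (G : SimpleGraph V)
    (E : Finset V → (∀ v, X v) → ℝ)
    (hEloc : ∀ c x y, (∀ v ∈ c, x v = y v) → E c x = E c y)
    (hEnorm : ∀ (c : Finset V) x, (∃ t ∈ c, x t = z t) → E c x = 0)
    (hEclique : ∀ c : Finset V, (∃ x, E c x ≠ 0) → G.IsClique (c : Set V))
    (Z : ℝ) (hZ : 0 < Z) (p : (∀ v, X v) → ℝ)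
    (hp : ∀ x, p x = (1 / Z) * Real.exp (-∑ c : Finset V, E c x))
    (hsum : ∑ x, p x = 1)
    (A q : Finset V) (hq : G.IsClique (q : Set V)) (hqA : q ⊆ A)
    (j : V) (hjq : j ∈ q)
    (hlap : StrongLAP G (A : Set V) (q : Set V))
    (F : Finset V → (∀ v, X v) → ℝ)
    (hFloc : ∀ c x y, (∀ v ∈ c, x v = y v) → F c x = F c y)
    (hFnorm : ∀ (c : Finset V) x, (∃ t ∈ c, x t = z t) → F c x = 0)
    (hFsupp : ∀ c : Finset V, ¬ c ⊆ A → ∀ x, F c x = 0)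
    (Zj : (∀ v, X v) → ℝ) (hZjpos : ∀ x, 0 < Zj x)
    (hZjloc : ∀ x y, (∀ v, v ≠ j → x v = y v) → Zj x = Zj y)
    (hrep : ∀ x, marginal p A x / (∑ t : X j, marginal p A (Function.update x j t)) =
        (1 / Zj x) * Real.exp (-∑ c : Finset V, F c x)) :
    F q = E q := by
  classical
  obtain ⟨-, i₀, hi₀, j₀, hj₀, hij₀, hnconn⟩ := hlap
  have hi₀q : i₀ ∈ q := hi₀
  have hj₀q : j₀ ∈ q := hj₀
  have hi₀A : i₀ ∈ A := hqA hi₀q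
  have hj₀A : j₀ ∈ A := hqA hj₀q
  set S : Set V := reachSet G (↑A) i₀ with hSdef
  have hSA : ∀ v, v ∈ S → v ∉ A := fun v hv hvA => hv.1 hvA
  -- clique facts
  have K1 : ∀ c : Finset V, (∃ x, E c x ≠ 0) → (∃ u ∈ c, u ∈ S) →
      ∀ v ∈ c, v ∈ A ∨ v ∈ S := by
    intro c hnz ⟨u, huc, huS⟩ v hvc
    by_cases hvA : v ∈ A
    · exact Or.inl hvA
    · rcases eq_or_ne v u with rfl | hvu
      · exact Or.inr huS
      · have hadj : G.Adj u v := (hEclique c hnz) huc hvc hvu.symm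
        exact Or.inr (reachSet_closed huS (fun h => hvA h) hadj)
  have K2 : ∀ c : Finset V, (∃ x, E c x ≠ 0) → (∃ u ∈ c, u ∈ S) → j₀ ∉ c := by
    rintro c hnz ⟨u, huc, huS⟩ hj₀c
    have huj : u ≠ j₀ := fun h => (hSA u huS) (h ▸ hj₀A)
    have hadj : G.Adj u j₀ := (hEclique c hnz) huc hj₀c huj
    exact hnconn (reachSet_relPathConn huS hj₀A hi₀A hij₀ hadj)
  have K3 : ∀ c : Finset V, (∃ x, E c x ≠ 0) → ¬ c ⊆ A → ¬ (∃ u ∈ c, u ∈ S) →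
      i₀ ∉ c := by
    intro c hnz hcA hnex hi₀c
    obtain ⟨u, huc, huA⟩ := Finset.not_subset.1 hcA
    have hui : u ≠ i₀ := fun h => huA (h ▸ hi₀A)
    have hadj : G.Adj i₀ u := (hEclique c hnz) hi₀c huc hui.symm
    exact hnex ⟨u, huc, reachSet_base (fun h => huA h) hadj⟩
  -- grouped potentials
  set hA : (∀ v, X v) → ℝ := fun w => ∑ c : Finset V, if c ⊆ A then E c w else 0 with hAdef
  set hs : (∀ v, X v) → ℝ :=
    fun w => ∑ c : Finset V, if ¬ c ⊆ A ∧ ∃ u ∈ c, u ∈ S then E c w else 0 with hsdef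
  set ho : (∀ v, X v) → ℝ :=
    fun w => ∑ c : Finset V, if ¬ c ⊆ A ∧ ¬ ∃ u ∈ c, u ∈ S then E c w else 0 with hodef
  have hsplit : ∀ w, (∑ c : Finset V, E c w) = hA w + hs w + ho w := by
    intro w
    rw [hAdef, hsdef, hodef]
    rw [← Finset.sum_add_distrib, ← Finset.sum_add_distrib]
    refine Finset.sum_congr rfl fun c _ => ?_
    by_cases h1 : c ⊆ A
    · simp [h1]
    · by_cases h2 : ∃ u ∈ c, u ∈ S
      · simp [h1, h2]
      · simp [h1, h2]
  -- locality facts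
  have locA : ∀ w w', (∀ v ∈ A, w v = w' v) → hA w = hA w' := by
    intro w w' h
    rw [hAdef]
    refine Finset.sum_congr rfl fun c _ => ?_
    by_cases hc : c ⊆ A
    · rw [if_pos hc, if_pos hc]; exact hEloc c _ _ fun v hv => h v (hc hv)
    · rw [if_neg hc, if_neg hc]
  have locS : ∀ w w', (∀ v, (v ∈ A ∨ v ∈ S) → w v = w' v) → hs w = hs w' := by
    intro w w' h
    rw [hsdef]
    refine Finset.sum_congr rfl fun c _ => ?_
    by_cases hc : ¬ c ⊆ A ∧ ∃ u ∈ c, u ∈ S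
    · rw [if_pos hc, if_pos hc]
      by_cases hnz : ∃ x, E c x ≠ 0
      · exact hEloc c _ _ fun v hv => h v (K1 c hnz hc.2 v hv)
      · push_neg at hnz
        rw [hnz w, hnz w']
    · rw [if_neg hc, if_neg hc]
  have locO : ∀ w w', (∀ v, v ∉ S → w v = w' v) → ho w = ho w' := by
    intro w w' h
    rw [hodef]
    refine Finset.sum_congr rfl fun c _ => ?_
    by_cases hc : ¬ c ⊆ A ∧ ¬ ∃ u ∈ c, u ∈ S
    · rw [if_pos hc, if_pos hc]
      exact hEloc c _ _ fun v hv => h v (fun hvS => hc.2 ⟨v, hv, hvS⟩)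
    · rw [if_neg hc, if_neg hc]
  have locSj : ∀ w w', (∀ v, v ≠ j₀ → w v = w' v) → hs w = hs w' := by
    intro w w' h
    rw [hsdef]
    refine Finset.sum_congr rfl fun c _ => ?_
    by_cases hc : ¬ c ⊆ A ∧ ∃ u ∈ c, u ∈ S
    · rw [if_pos hc, if_pos hc]
      by_cases hnz : ∃ x, E c x ≠ 0
      · have hj₀c := K2 c hnz hc.2
        exact hEloc c _ _ fun v hv => h v (fun he => hj₀c (he ▸ hv))
      · push_neg at hnz
        rw [hnz w, hnz w']
    · rw [if_neg hc, if_neg hc]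
  have locOi : ∀ w w', (∀ v, v ≠ i₀ → w v = w' v) → ho w = ho w' := by
    intro w w' h
    rw [hodef]
    refine Finset.sum_congr rfl fun c _ => ?_
    by_cases hc : ¬ c ⊆ A ∧ ¬ ∃ u ∈ c, u ∈ S
    · rw [if_pos hc, if_pos hc]
      by_cases hnz : ∃ x, E c x ≠ 0
      · have hi₀c := K3 c hnz hc.1 hc.2
        exact hEloc c _ _ fun v hv => h v (fun he => hi₀c (he ▸ hv))
      · push_neg at hnz
        rw [hnz w, hnz w']
    · rw [if_neg hc, if_neg hc]
  -- the two factors of the marginal over the free region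
  set TS : (∀ v, X v) → ℝ :=
    fun y => ∑ w : ∀ v, X v, if ∀ v, v ∉ S → w v = y v then Real.exp (-hs w) else 0 with TSdef
  set TO : (∀ v, X v) → ℝ :=
    fun y => ∑ w : ∀ v, X v, if ∀ v, (v ∈ A ∨ v ∈ S) → w v = y v then Real.exp (-ho w) else 0
    with TOdef
  have margfac : ∀ y, marginal p A y = (1 / Z) * Real.exp (-hA y) * (TS y * TO y) := by
    intro y
    have step : ∀ w : ∀ v, X v, (if ∀ v ∈ A, w v = y v then p w else 0)
        = (1 / Z) * Real.exp (-hA y) *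
          (if ∀ v ∈ A, w v = y v then Real.exp (-hs w) * Real.exp (-ho w) else 0) := by
      intro w
      by_cases hc : ∀ v ∈ A, w v = y v
      · rw [if_pos hc, if_pos hc, hp w, hsplit w, locA w y hc]
        rw [neg_add, neg_add, Real.exp_add, Real.exp_add]
        ring
      · rw [if_neg hc, if_neg hc, mul_zero]
    rw [marginal]
    rw [Finset.sum_congr rfl fun w _ => step w, ← Finset.mul_sum]
    congr 1
    rw [TSdef, TOdef]
    exact lap_sum_factor S A hSA (fun w => Real.exp (-hs w)) (fun w => Real.exp (-ho w))
      (fun w w' h => by beta_reduce; rw [locS w w' h]) (fun w w' h => by beta_reduce; rw [locO w w' h]) y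
  have TSpos : ∀ y, 0 < TS y := by
    intro y
    rw [TSdef]
    exact lap_sum_ite_pos (fun w => ∀ v, v ∉ S → w v = y v) _
      (fun w => Real.exp_pos _) y (fun v _ => rfl)
  have TOpos : ∀ y, 0 < TO y := by
    intro y
    rw [TOdef]
    exact lap_sum_ite_pos (fun w => ∀ v, (v ∈ A ∨ v ∈ S) → w v = y v) _
      (fun w => Real.exp_pos _) y (fun v _ => rfl)
  have margpos : ∀ y, 0 < marginal p A y := by
    intro y
    rw [margfac y]
    have h1 : (0 : ℝ) < 1 / Z := by positivity
    exact mul_pos (mul_pos h1 (Real.exp_pos _)) (mul_pos (TSpos y) (TOpos y))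
  set D : (∀ v, X v) → ℝ := fun y => ∑ t : X j, marginal p A (Function.update y j t) with Ddef
  have Dpos : ∀ y, 0 < D y := by
    intro y
    have : Nonempty (X j) := ⟨z j⟩
    exact Finset.sum_pos (fun t _ => margpos _) Finset.univ_nonempty
  have Dloc : ∀ y y', (∀ v, v ≠ j → y v = y' v) → D y = D y' := by
    intro y y' h
    rw [Ddef]
    refine Finset.sum_congr rfl fun t _ => ?_
    have : Function.update y j t = Function.update y' j t := by
      funext v
      rcases eq_or_ne v j with rfl | hv
      · rw [Function.update_self, Function.update_self]
      · rw [Function.update_of_ne hv, Function.update_of_ne hv]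
        exact h v hv
    rw [this]
  have TSind : ∀ y y', (∀ v, v ≠ j₀ → y v = y' v) → TS y = TS y' := by
    intro y y' h
    rw [TSdef]
    exact lap_sum_ite_indep j₀ (fun v => v ∉ S) (fun w => Real.exp (-hs w))
      (fun w w' hw => by beta_reduce; rw [locSj w w' hw]) y y' h
  have TOind : ∀ y y', (∀ v, v ≠ i₀ → y v = y' v) → TO y = TO y' := by
    intro y y' h
    rw [TOdef]
    exact lap_sum_ite_indep i₀ (fun v => v ∈ A ∨ v ∈ S) (fun w => Real.exp (-ho w))
      (fun w w' hw => by beta_reduce; rw [locOi w w' hw]) y y' h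
  -- logarithmic identities
  have hlogm : ∀ y, Real.log (marginal p A y)
      = Real.log (1 / Z) + (-(hA y)) + Real.log (TS y) + Real.log (TO y) := by
    intro y
    have h1 : (0 : ℝ) < 1 / Z := by positivity
    rw [margfac y,
      Real.log_mul (mul_pos h1 (Real.exp_pos _)).ne' (mul_pos (TSpos y) (TOpos y)).ne',
      Real.log_mul h1.ne' (Real.exp_pos _).ne',
      Real.log_mul (TSpos y).ne' (TOpos y).ne', Real.log_exp]
    ring
  have hFsum : ∀ y, (∑ c : Finset V, F c y)
      = Real.log (1 / Zj y) + Real.log (D y) - Real.log (marginal p A y) := by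
    intro y
    have hZjy : (0 : ℝ) < 1 / Zj y := by
      have := hZjpos y; positivity
    have h : marginal p A y / D y = (1 / Zj y) * Real.exp (-∑ c : Finset V, F c y) := hrep y
    have hL : Real.log (marginal p A y / D y)
        = Real.log ((1 / Zj y) * Real.exp (-∑ c : Finset V, F c y)) := by
      rw [h]
    rw [Real.log_div (margpos y).ne' (Dpos y).ne',
      Real.log_mul hZjy.ne' (Real.exp_pos _).ne', Real.log_exp] at hL
    linarith
  -- the alternating-sum (Möbius) extraction
  funext x
  have hF := lap_altsum_moebius z x q F hFloc hFnorm
  rw [← hF]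
  have Z1 : ∑ s ∈ q.powerset, (-1 : ℝ) ^ ((q \ s).card) *
      Real.log (1 / Zj (lapPatch z x s)) = 0 :=
    lap_altsum_indep z x q hjq (fun y => Real.log (1 / Zj y))
      (fun y y' h => by beta_reduce; rw [hZjloc y y' h])
  have Z2 : ∑ s ∈ q.powerset, (-1 : ℝ) ^ ((q \ s).card) *
      Real.log (D (lapPatch z x s)) = 0 :=
    lap_altsum_indep z x q hjq (fun y => Real.log (D y))
      (fun y y' h => by beta_reduce; rw [Dloc y y' h])
  have Z3 : ∑ s ∈ q.powerset, (-1 : ℝ) ^ ((q \ s).card) * (-Real.log (1 / Z)) = 0 :=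
    lap_altsum_indep z x q hjq (fun _ => -Real.log (1 / Z)) (fun _ _ _ => rfl)
  have Z4 : ∑ s ∈ q.powerset, (-1 : ℝ) ^ ((q \ s).card) * hA (lapPatch z x s) = E q x := by
    have := lap_altsum_moebius z x q (fun c y => if c ⊆ A then E c y else 0)
      (fun c y y' h => by
        beta_reduce
        by_cases hc : c ⊆ A
        · rw [if_pos hc, if_pos hc]; exact hEloc c y y' h
        · rw [if_neg hc, if_neg hc])
      (fun c y hy => by
        beta_reduce
        by_cases hc : c ⊆ A
        · rw [if_pos hc]; exact hEnorm c y hy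
        · rw [if_neg hc])
    beta_reduce at this
    rw [if_pos hqA] at this
    rw [← this]
  have Z5 : ∑ s ∈ q.powerset, (-1 : ℝ) ^ ((q \ s).card) *
      (-Real.log (TS (lapPatch z x s))) = 0 :=
    lap_altsum_indep z x q hj₀q (fun y => -Real.log (TS y))
      (fun y y' h => by beta_reduce; rw [TSind y y' h])
  have Z6 : ∑ s ∈ q.powerset, (-1 : ℝ) ^ ((q \ s).card) *
      (-Real.log (TO (lapPatch z x s))) = 0 :=
    lap_altsum_indep z x q hi₀q (fun y => -Real.log (TO y))
      (fun y y' h => by beta_reduce; rw [TOind y y' h])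
  calc ∑ s ∈ q.powerset, (-1 : ℝ) ^ ((q \ s).card) * (∑ c : Finset V, F c (lapPatch z x s))
      = ∑ s ∈ q.powerset,
          ((-1 : ℝ) ^ ((q \ s).card) * Real.log (1 / Zj (lapPatch z x s))
          + (-1 : ℝ) ^ ((q \ s).card) * Real.log (D (lapPatch z x s))
          + (-1 : ℝ) ^ ((q \ s).card) * (-Real.log (1 / Z))
          + (-1 : ℝ) ^ ((q \ s).card) * hA (lapPatch z x s)
          + (-1 : ℝ) ^ ((q \ s).card) * (-Real.log (TS (lapPatch z x s)))
          + (-1 : ℝ) ^ ((q \ s).card) * (-Real.log (TO (lapPatch z x s)))) := by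
        refine Finset.sum_congr rfl fun s _ => ?_
        rw [hFsum, hlogm]
        ring
    _ = E q x := by
        rw [Finset.sum_add_distrib, Finset.sum_add_distrib, Finset.sum_add_distrib,
          Finset.sum_add_distrib, Finset.sum_add_distrib, Z1, Z2, Z3, Z4, Z5, Z6]
        ring
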